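/- In ℝ², the strong maximal function of the unit square satisfies: there exist constants c,C > 0 such that for all 0 < t < 1/2, c·(1/t)·log(1/t) ≤ |{x ∈ ℝ² : M_𝓡(χ_{[0,1]²})(x) > t}| ≤ C·(1/t)·log(1/t). -/

import Mathlib

open MeasureTheory
open scoped ENNReal

/-- An open axis-parallel rectangle in `ℝⁿ`. -/
def IsRect {n : ℕ} (R : Set (Fin n → ℝ)) : Prop :=
  ∃ a b : Fin n → ℝ, (∀ i, a i < b i) ∧
    R = Set.univ.pi fun i => Set.Ioo (a i) (b i)

/-- The average of `|f|` over a set `R` (as an extended nonnegative real). -/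
noncomputable def avgAbs {n : ℕ} (R : Set (Fin n → ℝ)) (f : (Fin n → ℝ) → ℝ) : ℝ≥0∞ :=
  (∫⁻ y in R, ENNReal.ofReal |f y|) / volume R

/-- The (linear) strong maximal function over axis-parallel rectangles. -/
noncomputable def strongMaximal {n : ℕ} (f : (Fin n → ℝ) → ℝ) (x : Fin n → ℝ) : ℝ≥0∞ :=
  ⨆ (R : Set (Fin n → ℝ)) (_ : IsRect R) (_ : x ∈ R), avgAbs R f

/-- The multilinear strong maximal function over axis-parallel rectangles. -/
noncomputable def multiStrongMaximal {n m : ℕ} (f : Fin m → (Fin n → ℝ) → ℝ)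
    (x : Fin n → ℝ) : ℝ≥0∞ :=
  ⨆ (R : Set (Fin n → ℝ)) (_ : IsRect R) (_ : x ∈ R), ∏ i, avgAbs R (f i)

/-- The unit square in `ℝ²`. -/
def unitSquare : Set (Fin 2 → ℝ) := Set.univ.pi fun _ => Set.Icc (0:ℝ) 1

/- ################ auxiliary development ################ -/

noncomputable def hfun (s : ℝ) : ℝ := max 1 (max s (1 - s))

lemma one_le_hfun (s : ℝ) : 1 ≤ hfun s := le_max_left _ _

lemma hfun_pos (s : ℝ) : 0 < hfun s := lt_of_lt_of_le one_pos (one_le_hfun s)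

lemma le_hfun (s : ℝ) : s ≤ hfun s := le_max_of_le_right (le_max_left _ _)

lemma one_sub_le_hfun (s : ℝ) : 1 - s ≤ hfun s := le_max_of_le_right (le_max_right _ _)

lemma hfun_of_one_le {s : ℝ} (h : 1 ≤ s) : hfun s = s := by
  unfold hfun
  rw [max_eq_left (by linarith : 1 - s ≤ s), max_eq_right h]

lemma hfun_of_nonpos {s : ℝ} (h : s ≤ 0) : hfun s = 1 - s := by
  unfold hfun
  rw [max_eq_right (by linarith : s ≤ 1 - s), max_eq_right (by linarith : (1:ℝ) ≤ 1 - s)]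

lemma measurableSet_unitSquare : MeasurableSet unitSquare :=
  MeasurableSet.univ_pi fun _ => measurableSet_Icc

/-- numerator of the average -/
lemma num_eq (R : Set (Fin 2 → ℝ)) :
    (∫⁻ y in R, ENNReal.ofReal |Set.indicator unitSquare (fun _ => (1:ℝ)) y|)
      = volume (unitSquare ∩ R) := by
  have hfe : (fun y => ENNReal.ofReal |Set.indicator unitSquare (fun _ => (1:ℝ)) y|)
      = unitSquare.indicator (1 : (Fin 2 → ℝ) → ℝ≥0∞) := by
    funext y
    by_cases hy : y ∈ unitSquare <;> simp [hy]
  rw [hfe, lintegral_indicator_one measurableSet_unitSquare,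
    Measure.restrict_apply measurableSet_unitSquare]

/-- 1-d bound of intersection length. -/
lemma key1d {a b s : ℝ} (ha : a < s) (hb : s < b) :
    volume (Set.Icc (0:ℝ) 1 ∩ Set.Ioo a b) ≤ ENNReal.ofReal ((b - a) / hfun s) := by
  have h1 : 1 ≤ hfun s := one_le_hfun s
  have hsub : Set.Icc (0:ℝ) 1 ∩ Set.Ioo a b ⊆ Set.Icc (max 0 a) (min 1 b) := by
    rintro y ⟨⟨h0, h1'⟩, hl, hr⟩
    exact ⟨max_le h0 hl.le, le_min h1' hr.le⟩
  refine (measure_mono hsub).trans ?_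
  rw [Real.volume_Icc]
  refine ENNReal.ofReal_le_ofReal ?_
  set L := min 1 b - max 0 a with hL
  rw [le_div_iff₀ (hfun_pos s)]
  rcases le_or_gt L 0 with hL0 | hL0
  · nlinarith [hfun_pos s, mul_nonpos_of_nonpos_of_nonneg hL0 (hfun_pos s).le]
  have hL1 : L ≤ 1 := by
    have := le_max_left (0:ℝ) a
    have := min_le_left (1:ℝ) b
    simp only [hL]; linarith
  rcases le_or_gt s 0 with hs | hs
  · rw [hfun_of_nonpos hs]
    have h1 : max 0 a ≥ 0 := le_max_left 0 a
    have h2 : min 1 b ≤ b := min_le_right 1 b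
    nlinarith [mul_nonneg (sub_nonneg.mpr hL1) (neg_nonneg.mpr hs)]
  rcases le_or_gt s 1 with hs1 | hs1
  · have : hfun s = 1 := by
      unfold hfun
      rw [max_eq_left]
      exact max_le hs1 (by linarith)
    rw [this]
    have h1 : a ≤ max 0 a := le_max_right 0 a
    have h2 : min 1 b ≤ b := min_le_right 1 b
    linarith
  · rw [hfun_of_one_le hs1.le]
    have h1 : a ≤ max 0 a := le_max_right 0 a
    have h2 : min 1 b ≤ 1 := min_le_left 1 b
    nlinarith [mul_nonneg (sub_nonneg.mpr hL1) (by linarith : (0:ℝ) ≤ s - 1)]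


lemma volume_rect {a b : Fin 2 → ℝ} (hab : ∀ i, a i < b i) :
    volume (Set.univ.pi fun i => Set.Ioo (a i) (b i))
      = ENNReal.ofReal ((b 0 - a 0) * (b 1 - a 1)) := by
  rw [volume_pi_pi]
  simp only [Real.volume_Ioo]
  rw [Fin.prod_univ_two, ← ENNReal.ofReal_mul (by linarith [hab 0])]

lemma M_le (x : Fin 2 → ℝ) :
    strongMaximal (Set.indicator unitSquare fun _ => (1:ℝ)) x
      ≤ ENNReal.ofReal ((hfun (x 0))⁻¹ * (hfun (x 1))⁻¹) := by
  refine iSup_le fun R => iSup_le fun hR => iSup_le fun hx => ?_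
  obtain ⟨a, b, hab, rfl⟩ := hR
  have hx0 : x 0 ∈ Set.Ioo (a 0) (b 0) := hx 0 (Set.mem_univ _)
  have hx1 : x 1 ∈ Set.Ioo (a 1) (b 1) := hx 1 (Set.mem_univ _)
  rw [avgAbs, num_eq, volume_rect hab]
  have hQR : unitSquare ∩ (Set.univ.pi fun i => Set.Ioo (a i) (b i))
      = Set.univ.pi fun i => Set.Icc (0:ℝ) 1 ∩ Set.Ioo (a i) (b i) := by
    rw [unitSquare, ← Set.pi_inter_distrib]
  rw [hQR, volume_pi_pi, Fin.prod_univ_two]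
  have hb0 : 0 < b 0 - a 0 := by linarith [hab 0]
  have hb1 : 0 < b 1 - a 1 := by linarith [hab 1]
  rw [ENNReal.div_le_iff (ne_of_gt (ENNReal.ofReal_pos.mpr (by nlinarith)))
    ENNReal.ofReal_ne_top]
  calc volume (Set.Icc (0:ℝ) 1 ∩ Set.Ioo (a 0) (b 0)) *
        volume (Set.Icc (0:ℝ) 1 ∩ Set.Ioo (a 1) (b 1))
      ≤ ENNReal.ofReal ((b 0 - a 0) / hfun (x 0)) *
        ENNReal.ofReal ((b 1 - a 1) / hfun (x 1)) :=
        mul_le_mul' (key1d hx0.1 hx0.2) (key1d hx1.1 hx1.2)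
    _ = ENNReal.ofReal ((hfun (x 0))⁻¹ * (hfun (x 1))⁻¹ * ((b 0 - a 0) * (b 1 - a 1))) := by
        rw [← ENNReal.ofReal_mul (div_nonneg hb0.le (hfun_pos _).le)]
        congr 1
        have hp0 := hfun_pos (x 0)
        have hp1 := hfun_pos (x 1)
        field_simp
    _ ≤ ENNReal.ofReal ((hfun (x 0))⁻¹ * (hfun (x 1))⁻¹) *
        ENNReal.ofReal ((b 0 - a 0) * (b 1 - a 1)) := by
        rw [← ENNReal.ofReal_mul (mul_nonneg (inv_nonneg.mpr (hfun_pos (x 0)).le)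
          (inv_nonneg.mpr (hfun_pos (x 1)).le))]

/-- lower bound on the maximal function in the far quadrant. -/
lemma t_lt_M {t : ℝ} (ht : 0 < t) (x : Fin 2 → ℝ) (h0 : 1 < x 0) (h1 : 1 < x 1)
    (hprod : x 0 * x 1 < 1 / t) :
    ENNReal.ofReal t < strongMaximal (Set.indicator unitSquare fun _ => (1:ℝ)) x := by
  have hδ0 : 0 < 1 / t - x 0 * x 1 := by linarith
  set δ := 1 / t - x 0 * x 1 with hδ
  set ε := min 1 (δ / (2 * (x 0 + x 1 + 1))) with hε
  have hden : 0 < 2 * (x 0 + x 1 + 1) := by linarith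
  have hε0 : 0 < ε := lt_min one_pos (div_pos hδ0 hden)
  have hε1 : ε ≤ 1 := min_le_left _ _
  have hε2 : ε ≤ δ / (2 * (x 0 + x 1 + 1)) := min_le_right _ _
  clear_value ε
  clear_value δ
  have hx1i : ∀ i, 1 < x i := by
    intro i; fin_cases i <;> assumption
  have hkey : (x 0 + ε) * (x 1 + ε) < 1 / t := by
    have h3 : ε * (2 * (x 0 + x 1 + 1)) ≤ δ := by
      have := (le_div_iff₀ hden).mp hε2
      linarith
    have hee : ε * ε ≤ ε := mul_le_of_le_one_right hε0.le hε1
    have hde : x 0 * x 1 + δ = 1 / t := by rw [hδ]; ring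
    calc (x 0 + ε) * (x 1 + ε) = x 0 * x 1 + (ε * x 0 + ε * x 1 + ε * ε) := by ring
      _ ≤ x 0 * x 1 + (ε * x 0 + ε * x 1 + ε) := by linarith
      _ ≤ x 0 * x 1 + δ / 2 := by linarith
      _ < 1 / t := by linarith
  set R := Set.univ.pi fun i => Set.Ioo (0:ℝ) (x i + ε) with hRdef
  have hRect : IsRect R := by
    refine ⟨fun _ => 0, fun i => x i + ε, fun i => ?_, rfl⟩
    show (0:ℝ) < x i + ε
    have := hx1i i; linarith
  have hxR : x ∈ R := by
    intro i _
    have := hx1i i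
    exact ⟨by linarith, by linarith⟩
  have hIeq : ∀ i : Fin 2, Set.Icc (0:ℝ) 1 ∩ Set.Ioo 0 (x i + ε) = Set.Ioc (0:ℝ) 1 := by
    intro i
    have hgt : (1:ℝ) < x i + ε := by have := hx1i i; linarith
    ext y
    constructor
    · rintro ⟨⟨_, hy1⟩, hyl, _⟩
      exact ⟨hyl, hy1⟩
    · rintro ⟨hyl, hy1⟩
      exact ⟨⟨hyl.le, hy1⟩, hyl, lt_of_le_of_lt hy1 hgt⟩
  have hP : 0 < (x 0 + ε) * (x 1 + ε) := by nlinarith [hx1i 0, hx1i 1]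
  have havg : avgAbs R (Set.indicator unitSquare fun _ => (1:ℝ))
      = ENNReal.ofReal (((x 0 + ε) * (x 1 + ε))⁻¹) := by
    rw [avgAbs, num_eq]
    have hQR : unitSquare ∩ R = Set.univ.pi fun i => Set.Ioc (0:ℝ) 1 := by
      rw [unitSquare, hRdef, ← Set.pi_inter_distrib]
      exact congrArg _ (funext fun i => hIeq i)
    have hvR : volume R = ENNReal.ofReal ((x 0 + ε) * (x 1 + ε)) := by
      have := volume_rect (a := fun _ => (0:ℝ)) (b := fun i => x i + ε)
        (fun i => show (0:ℝ) < x i + ε by have := hx1i i; linarith)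
      simpa using this
    rw [hQR, volume_pi_pi, hvR]
    simp only [Real.volume_Ioc, sub_zero, ENNReal.ofReal_one]
    rw [Finset.prod_const_one, one_div, ENNReal.ofReal_inv_of_pos hP]
  have hlt : ENNReal.ofReal t < avgAbs R (Set.indicator unitSquare fun _ => (1:ℝ)) := by
    rw [havg]
    refine (ENNReal.ofReal_lt_ofReal_iff (by positivity)).mpr ?_
    rw [lt_inv_comm₀ ht hP]
    rwa [inv_eq_one_div]
  exact lt_of_lt_of_le hlt
    (le_iSup_of_le R (le_iSup_of_le hRect (le_iSup_of_le hxR le_rfl)))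

lemma integral_two_s_inv {s : ℝ} (hs : 2 < s) :
    ∫ x in (1:ℝ)..s, 2 * s * x⁻¹ = 2 * s * Real.log s := by
  have h0 : (0:ℝ) ∉ Set.uIcc 1 s := by
    rw [Set.uIcc_of_le (by linarith : (1:ℝ) ≤ s)]
    intro h; exact absurd h.1 (by norm_num)
  rw [intervalIntegral.integral_const_mul, integral_inv h0, div_one]

/-- lower bound for the volume of the far-quadrant hyperbolic region. -/
lemma vol_lower {s : ℝ} (hs : 2 < s) :
    ENNReal.ofReal (s * Real.log s - (s - 1))
      ≤ volume {p : ℝ × ℝ | 1 < p.1 ∧ 1 < p.2 ∧ p.1 * p.2 < s} := by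
  have hE : MeasurableSet {p : ℝ × ℝ | 1 < p.1 ∧ 1 < p.2 ∧ p.1 * p.2 < s} := by
    refine IsOpen.measurableSet ?_
    refine (isOpen_lt continuous_const continuous_fst).inter
      ((isOpen_lt continuous_const continuous_snd).inter
        (isOpen_lt (continuous_fst.mul continuous_snd) continuous_const))
  rw [show (volume : Measure (ℝ × ℝ)) = (volume : Measure ℝ).prod volume from MeasureTheory.Measure.volume_eq_prod ℝ ℝ]
  rw [Measure.prod_apply hE]
  have hslice : ∀ x ∈ Set.Ioo (1:ℝ) s,
      volume (Prod.mk x ⁻¹' {p : ℝ × ℝ | 1 < p.1 ∧ 1 < p.2 ∧ p.1 * p.2 < s})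
        = ENNReal.ofReal (s * x⁻¹ - 1) := by
    intro x hx
    have hx1 : (1:ℝ) < x := hx.1
    have hx0 : (0:ℝ) < x := by linarith
    have : Prod.mk x ⁻¹' {p : ℝ × ℝ | 1 < p.1 ∧ 1 < p.2 ∧ p.1 * p.2 < s}
        = Set.Ioo 1 (s * x⁻¹) := by
      ext y
      simp only [Set.mem_preimage, Set.mem_setOf_eq, Set.mem_Ioo]
      constructor
      · rintro ⟨_, hy1, hy2⟩
        exact ⟨hy1, by rw [mul_comm s x⁻¹, ← div_eq_inv_mul, lt_div_iff₀ hx0]; linarith⟩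
      · rintro ⟨hy1, hy2⟩
        rw [mul_comm s x⁻¹, ← div_eq_inv_mul, lt_div_iff₀ hx0] at hy2
        exact ⟨hx1, hy1, by linarith⟩
    rw [this, Real.volume_Ioo]
  calc ENNReal.ofReal (s * Real.log s - (s - 1))
      = ∫⁻ x in Set.Ioo (1:ℝ) s, ENNReal.ofReal (s * x⁻¹ - 1) := by
        have hint : IntegrableOn (fun x : ℝ => s * x⁻¹ - 1) (Set.Ioo 1 s) := by
          refine ((ContinuousOn.integrableOn_Icc ?_).mono_set Set.Ioo_subset_Icc_self)
          refine ContinuousOn.sub (continuousOn_const.mul ?_) continuousOn_const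
          exact ContinuousOn.inv₀ continuousOn_id fun x hx => by
            have := hx.1; intro h; rw [h] at this; linarith
        rw [← MeasureTheory.ofReal_integral_eq_lintegral_ofReal hint ?_]
        · congr 1
          rw [← MeasureTheory.integral_Ioc_eq_integral_Ioo,
            ← intervalIntegral.integral_of_le (by linarith : (1:ℝ) ≤ s)]
          have h1 : IntervalIntegrable (fun x : ℝ => x⁻¹) volume 1 s :=
            intervalIntegral.intervalIntegrable_inv
              (fun x hx => by
                rw [Set.uIcc_of_le (by linarith : (1:ℝ) ≤ s)] at hx
                intro h; rw [h] at hx; exact absurd hx.1 (by norm_num))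
              continuousOn_id
          rw [intervalIntegral.integral_sub ((h1.const_mul s)) intervalIntegrable_const,
            intervalIntegral.integral_const_mul,
            integral_inv (by
              rw [Set.uIcc_of_le (by linarith : (1:ℝ) ≤ s)]
              intro h; exact absurd h.1 (by norm_num)),
            intervalIntegral.integral_const, div_one]
          simp only [smul_eq_mul, mul_one]
        · refine (ae_restrict_iff' measurableSet_Ioo).mpr (Filter.Eventually.of_forall ?_)
          intro x hx
          have hx0 : (0:ℝ) < x := by have := hx.1; linarith
          have : 1 < s * x⁻¹ := by
            rw [mul_comm s x⁻¹, ← div_eq_inv_mul, lt_div_iff₀ hx0]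
            have := hx.2; linarith
          simp only [Pi.zero_apply]
          linarith
    _ = ∫⁻ x in Set.Ioo (1:ℝ) s,
          volume (Prod.mk x ⁻¹' {p : ℝ × ℝ | 1 < p.1 ∧ 1 < p.2 ∧ p.1 * p.2 < s}) := by
        refine (setLIntegral_congr_fun measurableSet_Ioo
          (fun x hx => ?_)).symm
        exact hslice x hx
    _ ≤ ∫⁻ x, volume (Prod.mk x ⁻¹' {p : ℝ × ℝ | 1 < p.1 ∧ 1 < p.2 ∧ p.1 * p.2 < s}) :=
        setLIntegral_le_lintegral _ _

lemma continuous_hfun : Continuous hfun :=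
  continuous_const.max (continuous_id.max (continuous_const.sub continuous_id))

/-- upper bound for the volume of the sub-level region of `hfun * hfun`. -/
lemma vol_upper {s : ℝ} (hs : 2 < s) :
    volume {p : ℝ × ℝ | hfun p.1 * hfun p.2 < s}
      ≤ ENNReal.ofReal (2 * s + 2 * s * Real.log s + 2 * s * Real.log s) := by
  have hA : MeasurableSet {p : ℝ × ℝ | hfun p.1 * hfun p.2 < s} :=
    IsOpen.measurableSet (isOpen_lt
      ((continuous_hfun.comp continuous_fst).mul (continuous_hfun.comp continuous_snd))
      continuous_const)
  rw [show (volume : Measure (ℝ × ℝ)) = (volume : Measure ℝ).prod volume from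
    MeasureTheory.Measure.volume_eq_prod ℝ ℝ]
  rw [Measure.prod_apply hA]
  have hptwise : ∀ x : ℝ, volume (Prod.mk x ⁻¹' {p : ℝ × ℝ | hfun p.1 * hfun p.2 < s})
      ≤ (Set.Ioo (1 - s) s).indicator (fun x => ENNReal.ofReal (2 * s * (hfun x)⁻¹)) x := by
    intro x
    by_cases hx : x ∈ Set.Ioo (1 - s) s
    · rw [Set.indicator_of_mem hx]
      have hpre : Prod.mk x ⁻¹' {p : ℝ × ℝ | hfun p.1 * hfun p.2 < s}
          ⊆ Set.Ioo (1 - s * (hfun x)⁻¹) (s * (hfun x)⁻¹) := by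
        intro y hy
        simp only [Set.mem_preimage, Set.mem_setOf_eq] at hy
        have hhx := hfun_pos x
        have hhy : hfun y < s * (hfun x)⁻¹ := by
          rw [mul_comm s, ← div_eq_inv_mul, lt_div_iff₀ hhx]
          nlinarith [hy]
        exact ⟨by have := one_sub_le_hfun y; linarith,
          by have := le_hfun y; linarith⟩
      refine (measure_mono hpre).trans ?_
      rw [Real.volume_Ioo]
      refine ENNReal.ofReal_le_ofReal ?_
      have : (0:ℝ) < s * (hfun x)⁻¹ := mul_pos (by linarith) (inv_pos.mpr (hfun_pos x))
      linarith
    · rw [Set.indicator_of_notMem hx]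
      have : Prod.mk x ⁻¹' {p : ℝ × ℝ | hfun p.1 * hfun p.2 < s} = ∅ := by
        rw [Set.eq_empty_iff_forall_notMem]
        intro y hy
        simp only [Set.mem_preimage, Set.mem_setOf_eq] at hy
        have h1 : hfun x ≤ hfun x * hfun y :=
          le_mul_of_one_le_right (hfun_pos x).le (one_le_hfun y)
        have h2 : hfun x < s := by linarith
        refine hx ⟨?_, ?_⟩
        · have := one_sub_le_hfun x; linarith
        · have := le_hfun x; linarith
      rw [this]
      simp
  calc ∫⁻ x, volume (Prod.mk x ⁻¹' {p : ℝ × ℝ | hfun p.1 * hfun p.2 < s})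
      ≤ ∫⁻ x, (Set.Ioo (1 - s) s).indicator (fun x => ENNReal.ofReal (2 * s * (hfun x)⁻¹)) x :=
        lintegral_mono hptwise
    _ = ∫⁻ x in Set.Ioo (1 - s) s, ENNReal.ofReal (2 * s * (hfun x)⁻¹) :=
        lintegral_indicator measurableSet_Ioo _
    _ ≤ ∫⁻ x in Set.Ioo (1 - s) 0 ∪ (Set.Icc 0 1 ∪ Set.Ioo 1 s),
          ENNReal.ofReal (2 * s * (hfun x)⁻¹) := by
        refine lintegral_mono_set ?_
        intro x hx
        rcases lt_or_ge x 0 with h | h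
        · exact Or.inl ⟨hx.1, h⟩
        rcases le_or_gt x 1 with h1 | h1
        · exact Or.inr (Or.inl ⟨h, h1⟩)
        · exact Or.inr (Or.inr ⟨h1, hx.2⟩)
    _ ≤ (∫⁻ x in Set.Ioo (1 - s) 0, ENNReal.ofReal (2 * s * (hfun x)⁻¹))
        + ((∫⁻ x in Set.Icc 0 1, ENNReal.ofReal (2 * s * (hfun x)⁻¹))
          + (∫⁻ x in Set.Ioo 1 s, ENNReal.ofReal (2 * s * (hfun x)⁻¹))) :=
        (lintegral_union_le _ _ _).trans (add_le_add le_rfl (lintegral_union_le _ _ _))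
    _ ≤ ENNReal.ofReal (2 * s * Real.log s)
        + (ENNReal.ofReal (2 * s) + ENNReal.ofReal (2 * s * Real.log s)) := by
        gcongr
        · -- left piece
          calc (∫⁻ x in Set.Ioo (1 - s) 0, ENNReal.ofReal (2 * s * (hfun x)⁻¹))
              = ∫⁻ x in Set.Ioo (1 - s) 0, ENNReal.ofReal (2 * s * (1 - x)⁻¹) := by
                refine setLIntegral_congr_fun measurableSet_Ioo
                  (fun x hx => ?_)
                rw [hfun_of_nonpos hx.2.le]
            _ = ENNReal.ofReal (∫ x in Set.Ioo (1 - s) 0, 2 * s * (1 - x)⁻¹) := by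
                refine (MeasureTheory.ofReal_integral_eq_lintegral_ofReal ?_ ?_).symm
                · refine ((ContinuousOn.integrableOn_Icc ?_).mono_set Set.Ioo_subset_Icc_self)
                  refine continuousOn_const.mul (ContinuousOn.inv₀
                    (continuousOn_const.sub continuousOn_id) ?_)
                  intro x hx h
                  have := hx.2
                  have hx1 : x = 1 := by linarith [sub_eq_zero.mp h]
                  linarith
                · refine (ae_restrict_iff' measurableSet_Ioo).mpr
                    (Filter.Eventually.of_forall fun x hx => ?_)
                  simp only [Pi.zero_apply]
                  have hx0 : (0:ℝ) < 1 - x := by have := hx.2; linarith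
                  positivity
            _ = ENNReal.ofReal (2 * s * Real.log s) := by
                rw [← MeasureTheory.integral_Ioc_eq_integral_Ioo,
                  ← intervalIntegral.integral_of_le (by linarith : 1 - s ≤ (0:ℝ))]
                have := intervalIntegral.integral_comp_sub_left
                  (a := 1 - s) (b := 0) (fun u : ℝ => 2 * s * u⁻¹) 1
                simp only [sub_zero, sub_sub_cancel] at this
                rw [this, integral_two_s_inv hs]
            _ ≤ ENNReal.ofReal (2 * s * Real.log s) := le_rfl
        · -- middle piece
          calc (∫⁻ x in Set.Icc 0 1, ENNReal.ofReal (2 * s * (hfun x)⁻¹))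
              ≤ ∫⁻ _ in Set.Icc (0:ℝ) 1, ENNReal.ofReal (2 * s) := by
                refine lintegral_mono fun x => ENNReal.ofReal_le_ofReal ?_
                have h1 := one_le_hfun x
                have h2 : (hfun x)⁻¹ ≤ 1 := inv_le_one_of_one_le₀ h1
                nlinarith
            _ = ENNReal.ofReal (2 * s) := by
                rw [setLIntegral_const, Real.volume_Icc]
                norm_num
        · -- right piece
          calc (∫⁻ x in Set.Ioo 1 s, ENNReal.ofReal (2 * s * (hfun x)⁻¹))
              = ∫⁻ x in Set.Ioo 1 s, ENNReal.ofReal (2 * s * x⁻¹) := by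
                refine setLIntegral_congr_fun measurableSet_Ioo
                  (fun x hx => ?_)
                rw [hfun_of_one_le hx.1.le]
            _ = ENNReal.ofReal (∫ x in Set.Ioo (1:ℝ) s, 2 * s * x⁻¹) := by
                refine (MeasureTheory.ofReal_integral_eq_lintegral_ofReal ?_ ?_).symm
                · refine ((ContinuousOn.integrableOn_Icc ?_).mono_set Set.Ioo_subset_Icc_self)
                  refine continuousOn_const.mul (ContinuousOn.inv₀ continuousOn_id ?_)
                  intro x hx h
                  rw [h] at hx; exact absurd hx.1 (by norm_num)
                · refine (ae_restrict_iff' measurableSet_Ioo).mpr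
                    (Filter.Eventually.of_forall fun x hx => ?_)
                  simp only [Pi.zero_apply]
                  have hx0 : (0:ℝ) < x := by have := hx.1; linarith
                  positivity
            _ = ENNReal.ofReal (2 * s * Real.log s) := by
                rw [← MeasureTheory.integral_Ioc_eq_integral_Ioo,
                  ← intervalIntegral.integral_of_le (by linarith : (1:ℝ) ≤ s),
                  integral_two_s_inv hs]
            _ ≤ ENNReal.ofReal (2 * s * Real.log s) := le_rfl
    _ ≤ ENNReal.ofReal (2 * s + 2 * s * Real.log s + 2 * s * Real.log s) := by
        rw [← ENNReal.ofReal_add (by positivity) (by nlinarith [Real.log_nonneg (by linarith : (1:ℝ) ≤ s)]),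
          ← ENNReal.ofReal_add (by nlinarith [Real.log_nonneg (by linarith : (1:ℝ) ≤ s)])
            (by nlinarith [Real.log_nonneg (by linarith : (1:ℝ) ≤ s)])]
        refine ENNReal.ofReal_le_ofReal (by ring_nf; linarith)

/-- the elementary real inequality for the lower bound. -/
lemma real_lower {s : ℝ} (hs : 2 ≤ s) :
    1 / 10 * s * Real.log s ≤ s * Real.log s - (s - 1) := by
  set r := Real.sqrt s with hrdef
  have hs0 : (0:ℝ) ≤ s := by linarith
  have hr2 : r ^ 2 = s := Real.sq_sqrt hs0
  have hr54 : (5/4 : ℝ) ≤ r := by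
    rw [hrdef, show (5/4:ℝ) = Real.sqrt ((5/4)^2) from (Real.sqrt_sq (by norm_num)).symm]
    exact Real.sqrt_le_sqrt (by norm_num; linarith)
  have hrpos : (0:ℝ) < r := by linarith
  have hlog : Real.log s = 2 * Real.log r := by
    rw [hrdef, Real.log_sqrt hs0]; ring
  have hlog2 : 1 - r⁻¹ ≤ Real.log r := by
    have h1 : Real.log r⁻¹ ≤ r⁻¹ - 1 := Real.log_le_sub_one_of_pos (by positivity)
    rw [Real.log_inv] at h1
    linarith
  have e1 : r ^ 2 * (1 - r⁻¹) = r * r - r := by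
    field_simp
  rw [hlog, ← hr2]
  nlinarith [mul_le_mul_of_nonneg_left hlog2 (show (0:ℝ) ≤ (9/5) * r ^ 2 by positivity),
    mul_nonneg (show (0:ℝ) ≤ r - 5/4 by linarith) (show (0:ℝ) ≤ r - 1 by linarith), e1]

/-- the elementary real inequality for the upper bound. -/
lemma real_upper {s : ℝ} (hs : 2 < s) :
    2 * s + 2 * s * Real.log s + 2 * s * Real.log s ≤ 7 * s * Real.log s := by
  have h1 : Real.log 2 ≤ Real.log s := by
    rw [Real.log_le_log_iff (by norm_num) (by linarith)]
    linarith
  have h2 : (0.6931471803 : ℝ) < Real.log 2 := Real.log_two_gt_d9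
  nlinarith

/-- In `ℝ²` the distribution function of the strong maximal function of the unit
square satisfies `|{M_𝓡(χ_{[0,1]²}) > t}| ≈ (1/t) log(1/t)` for `0 < t < 1/2`. -/
theorem strongMaximal_unitSquare_distribution :
    ∃ c C : ℝ, 0 < c ∧ 0 < C ∧ ∀ t : ℝ, 0 < t → t < 1 / 2 →
      ENNReal.ofReal (c * (1 / t) * Real.log (1 / t)) ≤
        volume {x | ENNReal.ofReal t <
          strongMaximal (Set.indicator unitSquare fun _ => (1:ℝ)) x} ∧
      volume {x | ENNReal.ofReal t <
          strongMaximal (Set.indicator unitSquare fun _ => (1:ℝ)) x} ≤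
        ENNReal.ofReal (C * (1 / t) * Real.log (1 / t)) := by
  refine ⟨1/10, 7, by norm_num, by norm_num, fun t ht ht2 => ?_⟩
  have hs : 2 < 1/t := by rw [lt_div_iff₀ ht]; linarith
  have hmp := MeasureTheory.volume_preserving_finTwoArrow ℝ
  constructor
  · -- lower bound
    have hE : MeasurableSet {p : ℝ × ℝ | 1 < p.1 ∧ 1 < p.2 ∧ p.1 * p.2 < 1/t} :=
      IsOpen.measurableSet ((isOpen_lt continuous_const continuous_fst).inter
        ((isOpen_lt continuous_const continuous_snd).inter
          (isOpen_lt (continuous_fst.mul continuous_snd) continuous_const)))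
    have hsub : (MeasurableEquiv.finTwoArrow ⁻¹'
          {p : ℝ × ℝ | 1 < p.1 ∧ 1 < p.2 ∧ p.1 * p.2 < 1/t})
        ⊆ {x | ENNReal.ofReal t <
            strongMaximal (Set.indicator unitSquare fun _ => (1:ℝ)) x} := by
      intro x hx
      simp only [Set.mem_preimage, MeasurableEquiv.finTwoArrow_apply,
        Set.mem_setOf_eq] at hx
      exact t_lt_M ht x hx.1 hx.2.1 hx.2.2
    refine le_trans ?_ (measure_mono hsub)
    rw [hmp.measure_preimage hE.nullMeasurableSet]
    refine le_trans ?_ (vol_lower hs)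
    refine ENNReal.ofReal_le_ofReal ?_
    have := real_lower hs.le
    linarith
  · -- upper bound
    have hA : MeasurableSet {p : ℝ × ℝ | hfun p.1 * hfun p.2 < 1/t} :=
      IsOpen.measurableSet (isOpen_lt
        ((continuous_hfun.comp continuous_fst).mul (continuous_hfun.comp continuous_snd))
        continuous_const)
    have hsub : {x | ENNReal.ofReal t <
          strongMaximal (Set.indicator unitSquare fun _ => (1:ℝ)) x}
        ⊆ MeasurableEquiv.finTwoArrow ⁻¹'
          {p : ℝ × ℝ | hfun p.1 * hfun p.2 < 1/t} := by
      intro x hx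
      simp only [Set.mem_setOf_eq] at hx
      have h1 := lt_of_lt_of_le hx (M_le x)
      have h2 : t < (hfun (x 0))⁻¹ * (hfun (x 1))⁻¹ :=
        (ENNReal.ofReal_lt_ofReal_iff_of_nonneg ht.le).mp h1
      simp only [Set.mem_preimage, MeasurableEquiv.finTwoArrow_apply, Set.mem_setOf_eq]
      have hP : 0 < hfun (x 0) * hfun (x 1) := mul_pos (hfun_pos _) (hfun_pos _)
      rw [← mul_inv] at h2
      rw [one_div]
      exact (lt_inv_comm₀ ht hP).mp h2
    refine (measure_mono hsub).trans ?_
    rw [hmp.measure_preimage hA.nullMeasurableSet]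
    refine (vol_upper hs).trans (ENNReal.ofReal_le_ofReal ?_)
    have := real_upper hs
    calc 2 * (1/t) + 2 * (1/t) * Real.log (1/t) + 2 * (1/t) * Real.log (1/t)
        ≤ 7 * (1/t) * Real.log (1/t) := real_upper hs
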